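/- The function g : (0, ∞) → ℝ defined by g(y) = (e^{−y} + y − 1)/(y·(1 − e^{−y})) is monotone nondecreasing on (0, ∞). -/

import Mathlib

open Real Set

lemma aux_key {x : ℝ} (hx : 0 < x) : x ^ 2 * Real.exp x < (Real.exp x - 1) ^ 2 := by
  have h1 : x / 2 < Real.sinh (x / 2) := Real.self_lt_sinh_iff.mpr (by linarith)
  rw [Real.sinh_eq] at h1
  have h2 : x < Real.exp (x / 2) - Real.exp (-(x / 2)) := by linarith
  have hpos : 0 < Real.exp (x / 2) := Real.exp_pos _
  have h3 : x * Real.exp (x / 2) < (Real.exp (x / 2) - Real.exp (-(x / 2))) * Real.exp (x / 2) := by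
    exact mul_lt_mul_of_pos_right h2 hpos
  have hmul : Real.exp (x / 2) * Real.exp (x / 2) = Real.exp x := by
    rw [← Real.exp_add]; ring_nf
  have hmul2 : Real.exp (-(x / 2)) * Real.exp (x / 2) = 1 := by
    rw [← Real.exp_add]; ring_nf; exact Real.exp_zero
  have h4 : x * Real.exp (x / 2) < Real.exp x - 1 := by
    calc x * Real.exp (x / 2) < (Real.exp (x / 2) - Real.exp (-(x / 2))) * Real.exp (x / 2) := h3
      _ = Real.exp x - 1 := by rw [sub_mul, hmul, hmul2]
  have hnn : 0 ≤ x * Real.exp (x / 2) := by positivity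
  have h5 := mul_self_lt_mul_self hnn h4
  calc x ^ 2 * Real.exp x = (x * Real.exp (x / 2)) * (x * Real.exp (x / 2)) := by
        rw [← hmul]; ring
    _ < (Real.exp x - 1) * (Real.exp x - 1) := h5
    _ = (Real.exp x - 1) ^ 2 := by ring

lemma aux_mono :
    MonotoneOn (fun y : ℝ => 1 + ((Real.exp y - 1)⁻¹ - y⁻¹)) (Set.Ioi (0 : ℝ)) := by
  have hderiv : ∀ x ∈ Set.Ioi (0 : ℝ),
      HasDerivAt (fun y : ℝ => 1 + ((Real.exp y - 1)⁻¹ - y⁻¹))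
        (-Real.exp x / (Real.exp x - 1) ^ 2 - -(x ^ 2)⁻¹) x := by
    intro x hx
    have hx0 : (0 : ℝ) < x := hx
    have hex : (1 : ℝ) < Real.exp x := by
      have := Real.add_one_le_exp x
      nlinarith [Real.add_one_lt_exp (ne_of_gt hx0)]
    have hne : Real.exp x - 1 ≠ 0 := by linarith
    have h1 : HasDerivAt (fun y : ℝ => Real.exp y - 1) (Real.exp x) x :=
      (Real.hasDerivAt_exp x).sub_const 1
    have h2 := h1.inv hne
    have h3 : HasDerivAt (fun y : ℝ => y⁻¹) (-(x ^ 2)⁻¹) x := hasDerivAt_inv (ne_of_gt hx0)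
    have h4 := (h2.sub h3).const_add (1 : ℝ)
    exact h4
  apply monotoneOn_of_deriv_nonneg (convex_Ioi 0)
  · -- continuity
    apply ContinuousOn.add continuousOn_const
    apply ContinuousOn.sub
    · exact ContinuousOn.inv₀ (by fun_prop) (fun x hx => by
        have hx0 : (0 : ℝ) < x := hx
        have := Real.add_one_lt_exp (ne_of_gt hx0)
        intro h; nlinarith)
    · exact ContinuousOn.inv₀ continuousOn_id (fun x hx => ne_of_gt hx)
  · intro x hx
    rw [interior_Ioi] at hx
    exact (hderiv x hx).differentiableAt.differentiableWithinAt
  · intro x hx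
    rw [interior_Ioi] at hx
    have hx0 : (0 : ℝ) < x := hx
    rw [(hderiv x hx).deriv]
    have hex : (1 : ℝ) < Real.exp x := by
      nlinarith [Real.add_one_lt_exp (ne_of_gt hx0)]
    have hkey := aux_key hx0
    have h1 : Real.exp x / (Real.exp x - 1) ^ 2 ≤ (x ^ 2)⁻¹ := by
      rw [div_le_iff₀ (pow_pos (by linarith : (0:ℝ) < Real.exp x - 1) 2), inv_mul_eq_div, le_div_iff₀ (by positivity)]
      nlinarith
    have : -Real.exp x / (Real.exp x - 1) ^ 2 = -(Real.exp x / (Real.exp x - 1) ^ 2) := by ring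
    rw [this]
    linarith

/-- The function `g(y) = (e^{−y} + y − 1)/(y·(1 − e^{−y}))` is monotone
nondecreasing on `(0, ∞)`. -/
theorem stmt_7 :
    MonotoneOn
      (fun y : ℝ => (Real.exp (-y) + y - 1) / (y * (1 - Real.exp (-y))))
      (Set.Ioi (0 : ℝ)) := by
  apply aux_mono.congr
  intro y hy
  have hy0 : (0 : ℝ) < y := hy
  have hex : (1 : ℝ) < Real.exp y := by
    nlinarith [Real.add_one_lt_exp (ne_of_gt hy0)]
  have hne : Real.exp y - 1 ≠ 0 := by linarith
  have hney : y ≠ 0 := ne_of_gt hy0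
  have hexpos : (0 : ℝ) < Real.exp y := Real.exp_pos _
  have hrw : Real.exp (-y) = (Real.exp y)⁻¹ := Real.exp_neg y
  simp only [hrw]
  field_simp
  ring
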